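/- If ε_0, ..., ε_J are independent random variables each with the standard Gumbel distribution (CDF exp(−e^{−x})) and η_0, ..., η_J are real constants, then for each j, the probability that η_j + ε_j ≥ η_k + ε_k for all k equals exp(η_j) / Σ_{k=0}^J exp(η_k). -/

import Mathlib

open Finset Real MeasureTheory ProbabilityTheory

open Set Filter

lemma hasDerivAt_G (a : ℝ) (ha : a ≠ 0) (x : ℝ) :
    HasDerivAt (fun x => Real.exp (-a * Real.exp (-x)) / a)
      (Real.exp (-x) * Real.exp (-a * Real.exp (-x))) x := by
  have h1 : HasDerivAt (fun x : ℝ => -x) (-1) x := (hasDerivAt_id x).neg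
  have h2 : HasDerivAt (fun x : ℝ => Real.exp (-x)) (Real.exp (-x) * (-1)) x := h1.exp
  have h3 : HasDerivAt (fun x : ℝ => -a * Real.exp (-x)) (-a * (Real.exp (-x) * (-1))) x :=
    h2.const_mul _
  have h4 := (h3.exp).div_const a
  have e : Real.exp (-x) * Real.exp (-a * Real.exp (-x)) =
      Real.exp (-a * Real.exp (-x)) * (-a * (Real.exp (-x) * (-1))) / a := by
    rw [eq_div_iff ha]
    ring
  rw [e]
  exact h4

lemma tendsto_G_atBot (a : ℝ) (ha : 0 < a) :
    Tendsto (fun x => Real.exp (-a * Real.exp (-x)) / a) atBot (nhds 0) := by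
  have h1 : Tendsto (fun x : ℝ => Real.exp (-x)) atBot atTop :=
    Real.tendsto_exp_atTop.comp tendsto_neg_atBot_atTop
  have h2 : Tendsto (fun x : ℝ => -a * Real.exp (-x)) atBot atBot :=
    (tendsto_const_mul_atBot_of_neg (neg_lt_zero.2 ha)).2 h1
  have h3 := (Real.tendsto_exp_atBot).comp h2
  simpa using h3.div_const a

lemma integrableOn_key (a t : ℝ) (ha : 0 < a) :
    IntegrableOn (fun x => Real.exp (-x) * Real.exp (-a * Real.exp (-x))) (Iic t) := by
  have hc : Continuous (fun x => Real.exp (-x) * Real.exp (-a * Real.exp (-x))) := by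
    continuity
  refine integrableOn_Iic_of_intervalIntegral_norm_bounded
    (Real.exp (-a * Real.exp (-t)) / a) t
    (fun _ : ℕ => hc.integrableOn_Ioc)
    (tendsto_neg_atTop_atBot.comp tendsto_natCast_atTop_atTop) ?_
  · filter_upwards [eventually_ge_atTop 0] with n hn
    simp only [Function.comp_apply]
    have hnn : ∀ x, 0 ≤ Real.exp (-x) * Real.exp (-a * Real.exp (-x)) := fun x =>
      mul_nonneg (Real.exp_nonneg _) (Real.exp_nonneg _)
    rcases le_or_gt (-(n:ℝ)) t with hle | hgt
    · rw [intervalIntegral.integral_of_le hle]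
      have : ∀ x, ‖Real.exp (-x) * Real.exp (-a * Real.exp (-x))‖ =
          Real.exp (-x) * Real.exp (-a * Real.exp (-x)) := fun x => abs_of_nonneg (hnn x)
      simp_rw [MeasureTheory.integral_Ioc_eq_integral_Ioo, this]
      have hFTC := intervalIntegral.integral_eq_sub_of_hasDerivAt
        (f := fun x => Real.exp (-a * Real.exp (-x)) / a)
        (f' := fun x => Real.exp (-x) * Real.exp (-a * Real.exp (-x)))
        (a := -(n:ℝ)) (b := t)
        (fun x _ => hasDerivAt_G a ha.ne' x)
        (by
          rw [intervalIntegrable_iff_integrableOn_Ioc_of_le hle]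
          exact hc.integrableOn_Ioc)
      rw [intervalIntegral.integral_of_le hle, MeasureTheory.integral_Ioc_eq_integral_Ioo] at hFTC
      rw [hFTC]
      have : 0 ≤ Real.exp (-a * Real.exp (-(-(n:ℝ)))) / a :=
        div_nonneg (Real.exp_nonneg _) ha.le
      linarith
    · rw [intervalIntegral.integral_of_ge hgt.le]
      have : 0 ≤ ∫ x in Set.Ioc t (-(n:ℝ)), ‖Real.exp (-x) * Real.exp (-a * Real.exp (-x))‖ :=
        MeasureTheory.integral_nonneg fun x => norm_nonneg _
      have h0 : 0 ≤ Real.exp (-a * Real.exp (-t)) / a := div_nonneg (Real.exp_nonneg _) ha.le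
      linarith

lemma key_integral (a t : ℝ) (ha : 0 < a) :
    ∫ x in Iic t, Real.exp (-x) * Real.exp (-a * Real.exp (-x)) =
      Real.exp (-a * Real.exp (-t)) / a := by
  have := integral_Iic_of_hasDerivAt_of_tendsto'
    (f := fun x => Real.exp (-a * Real.exp (-x)) / a)
    (f' := fun x => Real.exp (-x) * Real.exp (-a * Real.exp (-x)))
    (a := t) (m := 0)
    (fun x _ => hasDerivAt_G a ha.ne' x) (integrableOn_key a t ha) (tendsto_G_atBot a ha)
  simpa using this

lemma key_lintegral (a t : ℝ) (ha : 0 < a) :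
    ∫⁻ x in Iic t, ENNReal.ofReal (Real.exp (-x) * Real.exp (-a * Real.exp (-x))) =
      ENNReal.ofReal (Real.exp (-a * Real.exp (-t)) / a) := by
  rw [← key_integral a t ha,
    ofReal_integral_eq_lintegral_ofReal (integrableOn_key a t ha)
      (Filter.Eventually.of_forall fun x => mul_nonneg (Real.exp_nonneg _) (Real.exp_nonneg _))]

/-- The standard Gumbel measure on ℝ. -/
noncomputable def gumbelM : Measure ℝ :=
  volume.withDensity fun x => ENNReal.ofReal (Real.exp (-x) * Real.exp (-Real.exp (-x)))

/-- Generalized: derivative of Gumbel with rate a. -/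
noncomputable def gumbelMa (a : ℝ) : Measure ℝ :=
  volume.withDensity fun x => ENNReal.ofReal (Real.exp (-x) * Real.exp (-a * Real.exp (-x)))

lemma gumbelMa_Iic (a t : ℝ) (ha : 0 < a) :
    gumbelMa a (Iic t) = ENNReal.ofReal (Real.exp (-a * Real.exp (-t)) / a) := by
  rw [gumbelMa, withDensity_apply _ measurableSet_Iic, key_lintegral a t ha]

lemma gumbelMa_univ (a : ℝ) (ha : 0 < a) : gumbelMa a Set.univ = ENNReal.ofReal (1 / a) := by
  have h1 : Filter.Tendsto (fun t : ℝ => gumbelMa a (Iic t)) Filter.atTop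
      (nhds (gumbelMa a Set.univ)) := tendsto_measure_Iic_atTop _
  have h2 : Filter.Tendsto (fun t : ℝ => gumbelMa a (Iic t)) Filter.atTop
      (nhds (ENNReal.ofReal (1 / a))) := by
    simp_rw [fun t => gumbelMa_Iic a t ha]
    have : Filter.Tendsto (fun t : ℝ => Real.exp (-a * Real.exp (-t)) / a) Filter.atTop
        (nhds (1 / a)) := by
      have hexp : Filter.Tendsto (fun t : ℝ => Real.exp (-t)) Filter.atTop (nhds 0) :=
        Real.tendsto_exp_atBot.comp tendsto_neg_atTop_atBot
      have : Filter.Tendsto (fun t : ℝ => -a * Real.exp (-t)) Filter.atTop (nhds 0) := by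
        simpa using hexp.const_mul (-a)
      have := (Real.continuous_exp.tendsto 0).comp this
      simpa using this.div_const a
    exact (ENNReal.continuous_ofReal.tendsto _).comp this
  exact tendsto_nhds_unique h1 h2

lemma gumbelM_eq : gumbelM = gumbelMa 1 := by
  simp [gumbelM, gumbelMa]

lemma gumbelM_Iic (t : ℝ) : gumbelM (Iic t) = ENNReal.ofReal (Real.exp (-Real.exp (-t))) := by
  rw [gumbelM_eq, gumbelMa_Iic 1 t one_pos]
  norm_num

instance : IsProbabilityMeasure gumbelM := by
  constructor
  rw [gumbelM_eq, gumbelMa_univ 1 one_pos]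
  norm_num

lemma gumbelM_lintegral_exp (c : ℝ) (hc : 0 ≤ c) :
    ∫⁻ t, ENNReal.ofReal (Real.exp (-c * Real.exp (-t))) ∂gumbelM =
      ENNReal.ofReal (1 / (1 + c)) := by
  have hm1 : Measurable fun x : ℝ => ENNReal.ofReal (Real.exp (-x) * Real.exp (-Real.exp (-x))) :=
    (Real.measurable_exp.comp measurable_neg |>.mul
      (Real.measurable_exp.comp (Real.measurable_exp.comp measurable_neg).neg)).ennreal_ofReal
  have hm2 : Measurable fun t : ℝ => ENNReal.ofReal (Real.exp (-c * Real.exp (-t))) :=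
    (Real.measurable_exp.comp ((Real.measurable_exp.comp measurable_neg).const_mul (-c))).ennreal_ofReal
  rw [gumbelM, lintegral_withDensity_eq_lintegral_mul _ hm1 hm2]
  have : ∀ t : ℝ, (fun x => ENNReal.ofReal (Real.exp (-x) * Real.exp (-Real.exp (-x)))) t *
      ENNReal.ofReal (Real.exp (-c * Real.exp (-t))) =
      ENNReal.ofReal (Real.exp (-t) * Real.exp (-(1 + c) * Real.exp (-t))) := by
    intro t
    rw [← ENNReal.ofReal_mul (by positivity)]
    congr 1
    rw [← Real.exp_add, ← Real.exp_add]
    ring_nf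
    rw [← Real.exp_add]; congr 1; ring
  calc ∫⁻ t, (fun x => ENNReal.ofReal (Real.exp (-x) * Real.exp (-Real.exp (-x)))) t *
        ENNReal.ofReal (Real.exp (-c * Real.exp (-t))) ∂volume
      = ∫⁻ t, ENNReal.ofReal (Real.exp (-t) * Real.exp (-(1 + c) * Real.exp (-t))) ∂volume := by
        simp_rw [this]
    _ = gumbelMa (1 + c) Set.univ := by
        rw [gumbelMa, withDensity_apply _ MeasurableSet.univ, Measure.restrict_univ]
    _ = ENNReal.ofReal (1 / (1 + c)) := gumbelMa_univ _ (by linarith)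

lemma lintegral_eval_pi {ι : Type*} [Fintype ι] (i0 : ι) (huniq : ∀ k : ι, k = i0)
    (m : Measure ℝ) [SigmaFinite m] (g : ℝ → ENNReal) (hg : Measurable g) :
    ∫⁻ a : ι → ℝ, g (a i0) ∂(Measure.pi fun _ => m) = ∫⁻ t, g t ∂m := by
  have hcard : Fintype.card ι = 1 := Fintype.card_eq_one_iff.mpr ⟨i0, fun k => huniq k⟩
  have hmap : (Measure.pi fun _ : ι => m).map (fun a => a i0) = m := by
    refine Measure.ext fun s hs => ?_
    rw [Measure.map_apply (measurable_pi_apply i0) hs]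
    have hpre : (fun a : ι → ℝ => a i0) ⁻¹' s = Set.pi Set.univ (fun _ : ι => s) := by
      ext a
      simp only [Set.mem_preimage, Set.mem_pi, Set.mem_univ, forall_true_left]
      exact ⟨fun h k => by rw [huniq k]; exact h, fun h => h i0⟩
    rw [hpre, Measure.pi_pi, Finset.prod_const]
    simp [hcard]
  conv_rhs => rw [← hmap]
  rw [lintegral_map hg (measurable_pi_apply i0)]

set_option maxHeartbeats 1000000 in
/-- **Choice probabilities for i.i.d. Gumbel noise (multinomial logit).**
If `ε_0, …, ε_J` are independent random variables each with the standard Gumbel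
distribution (CDF `exp(−e^{−x})`) and `η_0, …, η_J` are real constants, then for each `j`
the probability that `η_j + ε_j ≥ η_k + ε_k` for all `k` equals
`e^{η_j} / Σ_{k} e^{η_k}`. -/
theorem gumbel_choice_probability {Ω : Type*} [MeasurableSpace Ω]
    (μ : Measure Ω) [IsProbabilityMeasure μ]
    (J : ℕ) (η : Fin (J + 1) → ℝ) (ε : Fin (J + 1) → Ω → ℝ)
    (hmeas : ∀ k, Measurable (ε k))
    (hindep : iIndepFun ε μ)
    (hcdf : ∀ (k) (x : ℝ),
      μ {ω | ε k ω ≤ x} = ENNReal.ofReal (Real.exp (-Real.exp (-x))))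
    (j : Fin (J + 1)) :
    μ {ω | ∀ k, η k + ε k ω ≤ η j + ε j ω} =
      ENNReal.ofReal (Real.exp (η j) / ∑ k, Real.exp (η k)) := by
  classical
  -- each marginal is the Gumbel measure
  have hεk_map : ∀ k, μ.map (ε k) = gumbelM := by
    intro k
    haveI : IsProbabilityMeasure (μ.map (ε k)) :=
      Measure.isProbabilityMeasure_map (hmeas k).aemeasurable
    refine MeasureTheory.Measure.ext_of_Iic _ _ fun t => ?_
    rw [Measure.map_apply (hmeas k) measurableSet_Iic, gumbelM_Iic]
    exact hcdf k t
  -- joint law is the product of Gumbel measures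
  have hTmeas : Measurable (fun ω k => ε k ω : Ω → Fin (J + 1) → ℝ) :=
    measurable_pi_lambda _ hmeas
  have hmap : μ.map (fun ω k => ε k ω) = Measure.pi (fun _ : Fin (J + 1) => gumbelM) := by
    refine (Measure.pi_eq fun s hs => ?_).symm
    rw [Measure.map_apply hTmeas (MeasurableSet.univ_pi hs)]
    have hpre : (fun ω k => ε k ω) ⁻¹' (Set.pi Set.univ s) =
        ⋂ k ∈ (Finset.univ : Finset (Fin (J + 1))), ε k ⁻¹' s k := by
      ext ω; simp [Set.mem_pi]
    rw [hpre, hindep.measure_inter_preimage_eq_mul _ (fun k _ => hs k)]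
    refine Finset.prod_congr rfl fun k _ => ?_
    rw [← hεk_map k, Measure.map_apply (hmeas k) (hs k)]
  -- the event as a preimage
  have hSmeas : MeasurableSet {x : Fin (J + 1) → ℝ | ∀ k, η k + x k ≤ η j + x j} := by
    have : {x : Fin (J + 1) → ℝ | ∀ k, η k + x k ≤ η j + x j} =
        ⋂ k, {x : Fin (J + 1) → ℝ | η k + x k ≤ η j + x j} := by ext x; simp
    rw [this]
    exact MeasurableSet.iInter fun k =>
      measurableSet_le (measurable_const.add (measurable_pi_apply k))
        (measurable_const.add (measurable_pi_apply j))
  have hev : {ω | ∀ k, η k + ε k ω ≤ η j + ε j ω} =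
      (fun ω k => ε k ω) ⁻¹' {x : Fin (J + 1) → ℝ | ∀ k, η k + x k ≤ η j + x j} := rfl
  rw [hev, ← Measure.map_apply hTmeas hSmeas, hmap]
  -- split off the j-th coordinate
  have hmp := measurePreserving_piEquivPiSubtypeProd
    (fun _ : Fin (J + 1) => gumbelM) (fun k => k = j)
  set B : Set (({k : Fin (J + 1) // k = j} → ℝ) × ({k : Fin (J + 1) // ¬k = j} → ℝ)) :=
    {q | ∀ k : {k : Fin (J + 1) // ¬k = j}, η k + q.2 k ≤ η j + q.1 ⟨j, rfl⟩} with hB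
  have hBmeas : MeasurableSet B := by
    have : B = ⋂ k : {k : Fin (J + 1) // ¬k = j},
        {q : ({k : Fin (J + 1) // k = j} → ℝ) × ({k : Fin (J + 1) // ¬k = j} → ℝ) |
          η k + q.2 k ≤ η j + q.1 ⟨j, rfl⟩} := by ext q; simp [hB]
    rw [this]
    exact MeasurableSet.iInter fun k =>
      measurableSet_le (by fun_prop) (by fun_prop)
  have hpreB : {x : Fin (J + 1) → ℝ | ∀ k, η k + x k ≤ η j + x j} =
      (MeasurableEquiv.piEquivPiSubtypeProd (fun _ : Fin (J + 1) => ℝ) (fun k => k = j)) ⁻¹' B := by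
    ext x
    simp only [Set.mem_preimage, Set.mem_setOf_eq, hB,
      MeasurableEquiv.piEquivPiSubtypeProd, Equiv.piEquivPiSubtypeProd,
      MeasurableEquiv.coe_mk, Equiv.coe_fn_mk]
    constructor
    · intro h k; exact h k
    · intro h k
      by_cases hk : k = j
      · subst hk; exact le_refl _
      · exact h ⟨k, hk⟩
  rw [hpreB, hmp.measure_preimage hBmeas.nullMeasurableSet,
    Measure.prod_apply hBmeas]
  -- compute the slice measure
  set c : ℝ := ∑ k ∈ Finset.univ.erase j, Real.exp (η k - η j) with hc
  have hc0 : 0 ≤ c := Finset.sum_nonneg fun _ _ => Real.exp_nonneg _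
  have hslice : ∀ a : {k : Fin (J + 1) // k = j} → ℝ,
      (Measure.pi fun _ : {k : Fin (J + 1) // ¬k = j} => gumbelM) (Prod.mk a ⁻¹' B) =
        ENNReal.ofReal (Real.exp (-c * Real.exp (-(a ⟨j, rfl⟩)))) := by
    intro a
    have h1 : Prod.mk a ⁻¹' B = Set.pi Set.univ
        (fun k : {k : Fin (J + 1) // ¬k = j} => Iic (η j + a ⟨j, rfl⟩ - η k)) := by
      ext y
      simp only [Set.mem_preimage, hB, Set.mem_setOf_eq, Set.mem_pi, Set.mem_univ,
        Set.mem_Iic, forall_true_left]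
      constructor
      · intro h k
        have := h k; linarith
      · intro h k
        have := h k; linarith
    rw [h1, Measure.pi_pi]
    simp_rw [gumbelM_Iic]
    rw [← ENNReal.ofReal_prod_of_nonneg (fun _ _ => Real.exp_nonneg _)]
    congr 1
    rw [← Real.exp_sum]
    congr 1
    have : ∀ k : {k : Fin (J + 1) // ¬k = j},
        -Real.exp (-(η j + a ⟨j, rfl⟩ - η (k : Fin (J + 1)))) =
          -(Real.exp (η k - η j) * Real.exp (-(a ⟨j, rfl⟩))) := by
      intro k
      rw [← Real.exp_add]
      ring_nf
    have hsum : ∑ k : {k : Fin (J + 1) // ¬k = j}, Real.exp (η (k : Fin (J + 1)) - η j) = c := by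
      rw [hc]
      exact (Finset.sum_subtype (Finset.univ.erase j)
        (fun x => ⟨fun hx => (Finset.mem_erase.mp hx).1,
          fun hx => Finset.mem_erase.mpr ⟨hx, Finset.mem_univ x⟩⟩)
        (fun k => Real.exp (η k - η j))).symm
    rw [Finset.sum_congr rfl (fun k _ => this k), Finset.sum_neg_distrib, ← Finset.sum_mul, hsum]
    ring
  simp_rw [hslice]
  -- integrate out the j-th coordinate
  have halg : ENNReal.ofReal (Real.exp (η j) / ∑ k, Real.exp (η k)) =
      ENNReal.ofReal (1 / (1 + c)) := by
    congr 1
    have hsum : ∑ k, Real.exp (η k) = Real.exp (η j) * (1 + c) := by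
      rw [hc, mul_add, mul_one, Finset.mul_sum]
      rw [← Finset.add_sum_erase _ _ (Finset.mem_univ j)]
      congr 1
      refine Finset.sum_congr rfl fun k _ => ?_
      rw [Real.exp_sub]
      field_simp
    have h1c : (0:ℝ) < 1 + c := by linarith
    rw [hsum]
    rw [div_mul_eq_div_div]
    rw [div_self (Real.exp_ne_zero _)]
  rw [halg, ← gumbelM_lintegral_exp c hc0,
    Subsingleton.elim (Subtype.fintype fun k : Fin (J + 1) => k = j) (Fintype.subtypeEq j)]
  exact lintegral_eval_pi (⟨j, rfl⟩ : {k : Fin (J + 1) // k = j}) (fun k => Subtype.ext k.2)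
    gumbelM (fun t => ENNReal.ofReal (Real.exp (-c * Real.exp (-t))))
    ((Real.measurable_exp.comp
      ((Real.measurable_exp.comp measurable_neg).const_mul (-c))).ennreal_ofReal)
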